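/- (Generalization bound for imbalanced domain generalization, Theorem 2.1.) Let X be a measurable space and Y = {−1, 1}. Let M be a countable set of measurable functions from X × Y to {−1, 1}. Let N ≥ 1, and for each d ∈ {1, …, N} let P_d be a probability measure on X and κ_d a Markov kernel from X to Y (the d-th source domain, with joint distribution P_d ⊗ κ_d); likewise let P_T be a probability measure on X and κ_T a Markov kernel from X to Y (the target domain, with joint distribution P_T ⊗ κ_T). Let π_1, …, π_N ≥ 0 with Σ_d π_d = 1, and let κ̄ be a Markov kernel from X to Y satisfying Σ_d π_d (P_d ⊗ κ_d) = (Σ_d π_d P_d) ⊗ κ̄ (the mixture posterior). Let H be a nonempty set of measurable hypotheses, and let h be a measurable hypothesis with m_h ∈ M and the constant function 1 ∈ M. Define ζ_in := max_{1 ≤ i, j ≤ N} d^{κ_i}_{M△M}(P_i, P_j), η_in := max_{1 ≤ i, j ≤ N} ∫_X D_M(κ_i, κ_j)(x) dP_j(x), ζ_out := d^{κ̄}_{M△M}(Σ_d π_d P_d, P_T), η_out := ∫_X D_M(κ̄, κ_T)(x) dP_T(x), and λ_π := inf_{h' ∈ H} ( Σ_d π_d ε_{P_d ⊗ κ_d}(h')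 + ε_{P_T ⊗ κ_T}(h') ). Then for every ℓ_max ≥ 0 and every δ ∈ ℝ, writing the margin of h as γ_h(x, y) := y · h(x) and Pr[γ_h ≤ δ] := (Σ_d π_d (P_d ⊗ κ_d))({(x, y) : γ_h(x, y) ≤ δ}), one has ε_{P_T ⊗ κ_T}(h) ≤ Σ_d π_d ε_{P_d ⊗ κ_d}(h) + ℓ_max · Pr[γ_h ≤ δ] + ζ_in + η_in + ζ_out + η_out + λ_π. -/

import Mathlib

open MeasureTheory ProbabilityTheory
open scoped ENNReal NNReal

noncomputable section

namespace IDG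

variable {X : Type*} [MeasurableSpace X]

/-- The risk of a hypothesis `h : X → ℤˣ` (values in `{-1, 1}`) with respect to a joint
distribution `μ` on `X × ℤˣ`: the measure of the error set `{(x, y) | h x ≠ y}`. -/
def risk (μ : Measure (X × ℤˣ)) (h : X → ℤˣ) : ℝ :=
  (μ {z : X × ℤˣ | h z.1 ≠ z.2}).toReal

/-- The symmetric-difference set `A(m, m') = {z | m z ≠ m' z}`. -/
def errSet (m m' : X × ℤˣ → ℤˣ) : Set (X × ℤˣ) := {z | m z ≠ m' z}

/-- The `x`-section of `A(m, m')`. -/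
def xsec (m m' : X × ℤˣ → ℤˣ) (x : X) : Set ℤˣ := {y | m (x, y) ≠ m' (x, y)}

/-- The `M△M`-divergence between two measures on `X × ℤˣ`. -/
def dMM (M : Set (X × ℤˣ → ℤˣ)) (μ ν : Measure (X × ℤˣ)) : ℝ :=
  ⨆ m : M, ⨆ m' : M, |(μ (errSet m.1 m'.1)).toReal - (ν (errSet m.1 m'.1)).toReal|

/-- The `κ`-weighted `M△M`-divergence between two measures on `X`. -/
def dMMker (M : Set (X × ℤˣ → ℤˣ)) (κ : Kernel X ℤˣ) (P Q : Measure X) : ℝ :=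
  ⨆ m : M, ⨆ m' : M,
    |(∫ x, (κ x (xsec m.1 m'.1 x)).toReal ∂P) - (∫ x, (κ x (xsec m.1 m'.1 x)).toReal ∂Q)|

/-- Pointwise posterior discrepancy between two kernels. -/
def DM (M : Set (X × ℤˣ → ℤˣ)) (κ κ' : Kernel X ℤˣ) (x : X) : ℝ :=
  ⨆ m : M, ⨆ m' : M, |(κ x (xsec m.1 m'.1 x)).toReal - (κ' x (xsec m.1 m'.1 x)).toReal|

/- ### Auxiliary lemmas -/

instance : MeasurableSingletonClass ℤˣ :=
  ⟨fun u => by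
    have hval : Measurable (Units.val : ℤˣ → ℤ) := fun s hs => ⟨s, hs, rfl⟩
    have : ({u} : Set ℤˣ) = Units.val ⁻¹' {(u : ℤ)} := by
      ext v; simp [Units.ext_iff]
    rw [this]
    exact hval (measurableSet_singleton _)⟩

lemma errSet_measurable {m m' : X × ℤˣ → ℤˣ} (hm : Measurable m) (hm' : Measurable m') :
    MeasurableSet (errSet m m') :=
  (measurableSet_eq_fun hm hm').compl

lemma xsec_eq (m m' : X × ℤˣ → ℤˣ) (x : X) :
    xsec m m' x = Prod.mk x ⁻¹' errSet m m' := rfl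

/-- measurability of `x ↦ κ x (xsec m m' x)` -/
lemma g_meas (κ' : Kernel X ℤˣ) [IsSFiniteKernel κ'] {m m' : X × ℤˣ → ℤˣ}
    (hm : Measurable m) (hm' : Measurable m') :
    Measurable (fun x => ((κ' x) (xsec m m' x)).toReal) := by
  have : Measurable (fun x => (κ' x) (Prod.mk x ⁻¹' errSet m m')) :=
    Kernel.measurable_kernel_prodMk_left (errSet_measurable hm hm')
  simpa [xsec_eq] using this.ennreal_toReal

lemma g_le_one (κ' : Kernel X ℤˣ) [IsMarkovKernel κ'] (m m' : X × ℤˣ → ℤˣ) (x : X) :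
    ((κ' x) (xsec m m' x)).toReal ≤ 1 := by
  exact ENNReal.toReal_le_of_le_ofReal zero_le_one
    (by rw [ENNReal.ofReal_one]; exact prob_le_one)

lemma g_int (κ' : Kernel X ℤˣ) [IsMarkovKernel κ'] {m m' : X × ℤˣ → ℤˣ}
    (hm : Measurable m) (hm' : Measurable m') (μ : Measure X) [IsFiniteMeasure μ] :
    Integrable (fun x => ((κ' x) (xsec m m' x)).toReal) μ := by
  refine (integrable_const (1 : ℝ)).mono' (g_meas κ' hm hm').aestronglyMeasurable ?_
  filter_upwards with x
  rw [Real.norm_eq_abs, abs_of_nonneg ENNReal.toReal_nonneg]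
  exact g_le_one κ' m m' x

lemma g_integral_bounds (κ' : Kernel X ℤˣ) [IsMarkovKernel κ'] {m m' : X × ℤˣ → ℤˣ}
    (hm : Measurable m) (hm' : Measurable m') (μ : Measure X) [IsProbabilityMeasure μ] :
    0 ≤ (∫ x, ((κ' x) (xsec m m' x)).toReal ∂μ) ∧
      (∫ x, ((κ' x) (xsec m m' x)).toReal ∂μ) ≤ 1 := by
  constructor
  · exact integral_nonneg fun x => ENNReal.toReal_nonneg
  · calc (∫ x, ((κ' x) (xsec m m' x)).toReal ∂μ) ≤ ∫ _, (1 : ℝ) ∂μ :=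
        integral_mono (g_int κ' hm hm' μ) (integrable_const 1) (fun x => g_le_one κ' m m' x)
    _ = 1 := by simp

/-- two-level `le_ciSup` for a family bounded by a constant -/
lemma le_iSup2 {ι : Sort*} (f : ι → ι → ℝ) (C : ℝ) (hf : ∀ i j, f i j ≤ C) (a b : ι) :
    f a b ≤ ⨆ i, ⨆ j, f i j := by
  have h1 : f a b ≤ ⨆ j, f a j :=
    le_ciSup ⟨C, by rintro _ ⟨j, rfl⟩; exact hf a j⟩ b
  refine h1.trans (le_ciSup (f := fun i => ⨆ j, f i j) ⟨C, ?_⟩ a)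
  rintro _ ⟨i, rfl⟩
  haveI : Nonempty ι := ⟨a⟩
  exact ciSup_le fun j => hf i j

/-- **Generalization bound for imbalanced domain generalization (Theorem 2.1).** -/
theorem idg_generalization_bound
    {N : ℕ} (hN : 1 ≤ N)
    (M : Set (X × ℤˣ → ℤˣ)) (hMcount : M.Countable) (hMmeas : ∀ m ∈ M, Measurable m)
    (P : Fin N → Measure X) (hP : ∀ d, IsProbabilityMeasure (P d))
    (κ : Fin N → Kernel X ℤˣ) (hκ : ∀ d, IsMarkovKernel (κ d))
    (PT : Measure X) (hPT : IsProbabilityMeasure PT)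
    (κT : Kernel X ℤˣ) (hκT : IsMarkovKernel κT)
    (π : Fin N → ℝ≥0) (hπ : ∑ d, π d = 1)
    (κbar : Kernel X ℤˣ) (hκbar : IsMarkovKernel κbar)
    (hmix : (∑ d, (π d : ℝ≥0∞) • (P d ⊗ₘ κ d)) = (∑ d, (π d : ℝ≥0∞) • P d) ⊗ₘ κbar)
    (H : Set (X → ℤˣ)) (hH : H.Nonempty) (hHmeas : ∀ h' ∈ H, Measurable h')
    (h : X → ℤˣ) (hmeas : Measurable h)
    (hmh : (fun z : X × ℤˣ => z.2 * h z.1) ∈ M)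
    (hone : (fun _ : X × ℤˣ => (1 : ℤˣ)) ∈ M)
    (ℓmax : ℝ) (hℓmax : 0 ≤ ℓmax) (δ : ℝ) :
    risk (PT ⊗ₘ κT) h ≤
      (∑ d, (π d : ℝ) * risk (P d ⊗ₘ κ d) h)
      + ℓmax * ((∑ d, (π d : ℝ≥0∞) • (P d ⊗ₘ κ d))
          {z : X × ℤˣ | (((z.2 * h z.1 : ℤˣ) : ℤ) : ℝ) ≤ δ}).toReal
      + (⨆ i, ⨆ j, dMMker M (κ i) (P i) (P j))
      + (⨆ i, ⨆ j, ∫ x, DM M (κ i) (κ j) x ∂(P j))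
      + dMMker M κbar (∑ d, (π d : ℝ≥0∞) • P d) PT
      + (∫ x, DM M κbar κT x ∂PT)
      + (⨅ h' : H, ((∑ d, (π d : ℝ) * risk (P d ⊗ₘ κ d) h'.1) + risk (PT ⊗ₘ κT) h'.1)) := by
  haveI : Countable ↥M := hMcount.to_subtype
  haveI : Nonempty ↥M := ⟨⟨_, hmh⟩⟩
  -- the maps m_h and 1
  set mh : X × ℤˣ → ℤˣ := fun z => z.2 * h z.1 with hmh_def
  set m1 : X × ℤˣ → ℤˣ := fun _ => (1 : ℤˣ) with hm1_def
  have hmh_meas : Measurable mh := hMmeas _ hmh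
  have hm1_meas : Measurable m1 := hMmeas _ hone
  set A : Set (X × ℤˣ) := errSet mh m1 with hA_def
  have hA : MeasurableSet A := errSet_measurable hmh_meas hm1_meas
  -- risk as measure of A
  have hrisk : ∀ μ : Measure (X × ℤˣ), risk μ h = (μ A).toReal := by
    intro μ
    have : {z : X × ℤˣ | h z.1 ≠ z.2} = A := by
      ext z
      simp only [hA_def, errSet, Set.mem_setOf_eq, hmh_def, hm1_def]
      constructor
      · intro hne heq
        exact hne (by rcases Int.units_eq_one_or z.2 with h2 | h2 <;>
          rcases Int.units_eq_one_or (h z.1) with h3 | h3 <;> simp_all)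
      · intro hne heq
        exact hne (by rw [heq, Int.units_mul_self])
    rw [risk, this]
  -- notation for the section-measure functions
  set gT : X → ℝ := fun x => ((κT x) (xsec mh m1 x)).toReal with hgT_def
  set gB : X → ℝ := fun x => ((κbar x) (xsec mh m1 x)).toReal with hgB_def
  set Pbar : Measure X := ∑ d, (π d : ℝ≥0∞) • P d with hPbar_def
  haveI : IsProbabilityMeasure Pbar := by
    constructor
    rw [hPbar_def]
    simp only [Measure.coe_finset_sum, Finset.sum_apply, Measure.smul_apply, smul_eq_mul]
    have : ∀ d : Fin N, (π d : ℝ≥0∞) * (P d) Set.univ = (π d : ℝ≥0∞) := by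
      intro d; simp [(hP d).measure_univ]
    rw [Finset.sum_congr rfl fun d _ => this d, ← ENNReal.coe_finset_sum, hπ]
    simp
  -- compProd applied to A
  have hcomp : ∀ (κ' : Kernel X ℤˣ) (μ : Measure X), IsMarkovKernel κ' → SFinite μ →
      ((μ ⊗ₘ κ') A).toReal = ∫ x, ((κ' x) (xsec mh m1 x)).toReal ∂μ := by
    intro κ' μ _ _
    rw [Measure.compProd_apply hA]
    have := integral_toReal (μ := μ) (f := fun a => (κ' a) (Prod.mk a ⁻¹' A))
      (Kernel.measurable_kernel_prodMk_left hA).aemeasurable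
      (Filter.Eventually.of_forall fun x => measure_lt_top _ _)
    exact this.symm
  have hcompT : ((PT ⊗ₘ κT) A).toReal = ∫ x, gT x ∂PT := hcomp κT PT hκT inferInstance
  have hcompBT : ((PT ⊗ₘ κbar) A).toReal = ∫ x, gB x ∂PT := hcomp κbar PT hκbar inferInstance
  have hcompB : ((Pbar ⊗ₘ κbar) A).toReal = ∫ x, gB x ∂Pbar := hcomp κbar Pbar hκbar inferInstance
  -- DM is measurable, nonneg, bounded by 1
  have hDM_nonneg : ∀ (κ1 κ2 : Kernel X ℤˣ) (x : X), 0 ≤ DM M κ1 κ2 x := fun κ1 κ2 x =>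
    Real.iSup_nonneg fun m => Real.iSup_nonneg fun m' => abs_nonneg _
  have hDM_le_one : ∀ (κ1 κ2 : Kernel X ℤˣ), IsMarkovKernel κ1 → IsMarkovKernel κ2 →
      ∀ x : X, DM M κ1 κ2 x ≤ 1 := by
    intro κ1 κ2 h1 h2 x
    refine ciSup_le fun m => ciSup_le fun m' => ?_
    rw [abs_sub_le_iff]
    constructor
    · linarith [g_le_one κ1 m.1 m'.1 x, (ENNReal.toReal_nonneg :
        0 ≤ ((κ2 x) (xsec m.1 m'.1 x)).toReal)]
    · linarith [g_le_one κ2 m.1 m'.1 x, (ENNReal.toReal_nonneg :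
        0 ≤ ((κ1 x) (xsec m.1 m'.1 x)).toReal)]
  have hDM_meas : ∀ (κ1 κ2 : Kernel X ℤˣ), IsMarkovKernel κ1 → IsMarkovKernel κ2 →
      Measurable (DM M κ1 κ2) := by
    intro κ1 κ2 h1 h2
    refine Measurable.iSup fun m => Measurable.iSup fun m' => ?_
    exact ((g_meas κ1 (hMmeas _ m.2) (hMmeas _ m'.2)).sub
      (g_meas κ2 (hMmeas _ m.2) (hMmeas _ m'.2))).abs
  have hDM_int : Integrable (DM M κbar κT) PT := by
    refine (integrable_const (1 : ℝ)).mono'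
      (hDM_meas κbar κT hκbar hκT).aestronglyMeasurable ?_
    filter_upwards with x
    rw [Real.norm_eq_abs, abs_of_nonneg (hDM_nonneg _ _ x)]
    exact hDM_le_one _ _ hκbar hκT x
  -- Step 1 : target risk ≤ ∫ gB ∂PT + η_out
  have step1 : ∫ x, gT x ∂PT ≤ (∫ x, gB x ∂PT) + ∫ x, DM M κbar κT x ∂PT := by
    rw [← integral_add (g_int κbar hmh_meas hm1_meas PT) hDM_int]
    refine integral_mono (g_int κT hmh_meas hm1_meas PT)
      ((g_int κbar hmh_meas hm1_meas PT).add hDM_int) fun x => ?_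
    have hle : |gB x - gT x| ≤ DM M κbar κT x := by
      refine le_iSup2 (fun m m' : M =>
        |((κbar x) (xsec m.1 m'.1 x)).toReal - ((κT x) (xsec m.1 m'.1 x)).toReal|) 1
        ?_ ⟨mh, hmh⟩ ⟨m1, hone⟩
      intro m m'
      rw [abs_sub_le_iff]
      constructor
      · linarith [g_le_one κbar m.1 m'.1 x, (ENNReal.toReal_nonneg :
          0 ≤ ((κT x) (xsec m.1 m'.1 x)).toReal)]
      · linarith [g_le_one κT m.1 m'.1 x, (ENNReal.toReal_nonneg :
          0 ≤ ((κbar x) (xsec m.1 m'.1 x)).toReal)]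
    have : gT x - gB x ≤ |gB x - gT x| := by
      rw [abs_sub_comm]; exact le_abs_self _
    simp only [Pi.add_apply]
    linarith
  -- Step 2 : ∫ gB ∂PT ≤ ∫ gB ∂Pbar + ζ_out
  have step2 : ∫ x, gB x ∂PT ≤ (∫ x, gB x ∂Pbar) + dMMker M κbar Pbar PT := by
    have hle : |(∫ x, gB x ∂Pbar) - ∫ x, gB x ∂PT| ≤ dMMker M κbar Pbar PT := by
      refine le_iSup2 (fun m m' : M =>
        |(∫ x, ((κbar x) (xsec m.1 m'.1 x)).toReal ∂Pbar) -
          ∫ x, ((κbar x) (xsec m.1 m'.1 x)).toReal ∂PT|) 1 ?_ ⟨mh, hmh⟩ ⟨m1, hone⟩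
      intro m m'
      obtain ⟨h1, h2⟩ := g_integral_bounds κbar (hMmeas _ m.2) (hMmeas _ m'.2) Pbar
      obtain ⟨h3, h4⟩ := g_integral_bounds κbar (hMmeas _ m.2) (hMmeas _ m'.2) PT
      rw [abs_sub_le_iff]; constructor <;> linarith
    have : (∫ x, gB x ∂PT) - ∫ x, gB x ∂Pbar ≤ |(∫ x, gB x ∂Pbar) - ∫ x, gB x ∂PT| := by
      rw [abs_sub_comm]; exact le_abs_self _
    linarith
  -- Step 3 : ∫ gB ∂Pbar = Σ π_d risk_d h
  have step3 : ∫ x, gB x ∂Pbar = ∑ d, (π d : ℝ) * risk (P d ⊗ₘ κ d) h := by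
    rw [← hcompB, ← hmix]
    simp only [Measure.coe_finset_sum, Finset.sum_apply, Measure.smul_apply, smul_eq_mul]
    rw [ENNReal.toReal_sum (fun d _ => by
      exact ENNReal.mul_ne_top ENNReal.coe_ne_top (measure_ne_top _ _))]
    refine Finset.sum_congr rfl fun d _ => ?_
    rw [hrisk (P d ⊗ₘ κ d), ENNReal.toReal_mul, ENNReal.coe_toReal]
  -- nonnegativity of the remaining terms
  have hmargin : 0 ≤ ℓmax * ((∑ d, (π d : ℝ≥0∞) • (P d ⊗ₘ κ d))
      {z : X × ℤˣ | (((z.2 * h z.1 : ℤˣ) : ℤ) : ℝ) ≤ δ}).toReal :=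
    mul_nonneg hℓmax ENNReal.toReal_nonneg
  have hζin : 0 ≤ ⨆ i, ⨆ j, dMMker M (κ i) (P i) (P j) :=
    Real.iSup_nonneg fun i => Real.iSup_nonneg fun j =>
      Real.iSup_nonneg fun m => Real.iSup_nonneg fun m' => abs_nonneg _
  have hηin : 0 ≤ ⨆ i, ⨆ j, ∫ x, DM M (κ i) (κ j) x ∂(P j) :=
    Real.iSup_nonneg fun i => Real.iSup_nonneg fun j =>
      integral_nonneg fun x => hDM_nonneg _ _ x
  have hlam : 0 ≤ ⨅ h' : H, ((∑ d, (π d : ℝ) * risk (P d ⊗ₘ κ d) h'.1)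
      + risk (PT ⊗ₘ κT) h'.1) := by
    refine Real.iInf_nonneg fun h' => add_nonneg ?_ ENNReal.toReal_nonneg
    exact Finset.sum_nonneg fun d _ => mul_nonneg (π d).coe_nonneg ENNReal.toReal_nonneg
  -- assemble
  have hchain : risk (PT ⊗ₘ κT) h ≤ (∑ d, (π d : ℝ) * risk (P d ⊗ₘ κ d) h)
      + dMMker M κbar Pbar PT + ∫ x, DM M κbar κT x ∂PT := by
    rw [hrisk (PT ⊗ₘ κT), hcompT]
    calc ∫ x, gT x ∂PT ≤ (∫ x, gB x ∂PT) + ∫ x, DM M κbar κT x ∂PT := step1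
      _ ≤ ((∫ x, gB x ∂Pbar) + dMMker M κbar Pbar PT) + ∫ x, DM M κbar κT x ∂PT := by
          linarith [step2]
      _ = _ := by rw [step3]
  linarith
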